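/- Let Z_1, Z_2 be limit permutations and (X_1,Y_1), (X_2,Y_2) their associated [0,1]²-valued random variables. Then d_□(Z_1,Z_2) = 0 if and only if (X_1,Y_1) and (X_2,Y_2) have the same distribution, which holds if and only if the set {x : Z_1(x,·) ≢ Z_2(x,·)} has Lebesgue measure zero. -/

import Mathlib

open MeasureTheory

/-- A limit permutation: a measurable `Z : [0,1]² → [0,1]` such that each `Z(x,·)` is a
cdf and `∫₀¹ Z(x,y) dx = y` for all `y ∈ [0,1]`. -/
def IsLimitPerm (Z : ℝ → ℝ → ℝ) : Prop :=
  Measurable (fun p : ℝ × ℝ => Z p.1 p.2) ∧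
  (∀ x y, Z x y ∈ Set.Icc (0:ℝ) 1) ∧
  (∀ x, MonotoneOn (Z x) (Set.Icc (0:ℝ) 1)) ∧
  (∀ x, ∀ y ∈ Set.Ico (0:ℝ) 1, ContinuousWithinAt (Z x) (Set.Ici y) y) ∧
  (∀ x, Z x 1 = 1) ∧
  (∀ y ∈ Set.Icc (0:ℝ) 1, ∫ x in Set.Icc (0:ℝ) 1, Z x y = y)

/-- The (generalized inverse) quantile function of the cdf `Z(x,·)`. -/
noncomputable def quantile (Z : ℝ → ℝ → ℝ) (x u : ℝ) : ℝ :=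
  sInf {y | y ∈ Set.Icc (0:ℝ) 1 ∧ u ≤ Z x y}

/-- The distribution of the `[0,1]²`-valued random variable `(X,Y)` associated with a
limit permutation `Z`: `X` is uniform on `[0,1]` and, given `X = x`, `Y` has cdf
`Z(x,·)`. It is realized as the image of the uniform distribution on the unit square
under `(x,u) ↦ (x, quantile Z x u)`. -/
noncomputable def assocMeasure (Z : ℝ → ℝ → ℝ) : Measure (ℝ × ℝ) :=
  Measure.map (fun p : ℝ × ℝ => (p.1, quantile Z p.1 p.2))
    (volume.restrict (Set.Icc (0:ℝ) 1 ×ˢ Set.Icc (0:ℝ) 1))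

/-- The rectangular distance between two measures on the plane: the supremum over
axis-parallel rectangles of the difference of their measures. -/
noncomputable def dRect (μ ν : Measure (ℝ × ℝ)) : ℝ :=
  sSup {r : ℝ | ∃ x₁ x₂ y₁ y₂ : ℝ, x₁ ≤ x₂ ∧ y₁ ≤ y₂ ∧
    r = |(μ (Set.Icc x₁ x₂ ×ˢ Set.Icc y₁ y₂)).toReal
          - (ν (Set.Icc x₁ x₂ ×ˢ Set.Icc y₁ y₂)).toReal|}

namespace LPaux

lemma quantile_mem (Z : ℝ → ℝ → ℝ) (h : IsLimitPerm Z) (x u : ℝ) (hu : u ≤ 1) :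
    quantile Z x u ∈ Set.Icc (0:ℝ) 1 := by
  have h1 : (1:ℝ) ∈ {y | y ∈ Set.Icc (0:ℝ) 1 ∧ u ≤ Z x y} := by
    refine ⟨⟨zero_le_one, le_rfl⟩, ?_⟩
    rw [h.2.2.2.2.1 x]; exact hu
  have hbdd : BddBelow {y | y ∈ Set.Icc (0:ℝ) 1 ∧ u ≤ Z x y} :=
    ⟨0, fun y hy => hy.1.1⟩
  constructor
  · exact le_csInf ⟨1, h1⟩ (fun y hy => hy.1.1)
  · exact csInf_le hbdd h1

lemma le_Z_quantile (Z : ℝ → ℝ → ℝ) (h : IsLimitPerm Z) (x u : ℝ) (hu : u ≤ 1)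
    (hq : quantile Z x u < 1) : u ≤ Z x (quantile Z x u) := by
  set S := {y | y ∈ Set.Icc (0:ℝ) 1 ∧ u ≤ Z x y} with hS
  have h1 : (1:ℝ) ∈ S := by
    refine ⟨⟨zero_le_one, le_rfl⟩, ?_⟩
    rw [h.2.2.2.2.1 x]; exact hu
  have hbdd : BddBelow S := ⟨0, fun y hy => hy.1.1⟩
  have hmem := quantile_mem Z h x u hu
  set q := quantile Z x u with hqdef
  by_contra hcon
  push_neg at hcon
  have hct : ContinuousWithinAt (Z x) (Set.Ici q) q :=
    h.2.2.2.1 x q ⟨hmem.1, hq⟩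
  have hev : ∀ᶠ y in nhdsWithin q (Set.Ici q), Z x y < u :=
    hct.eventually_lt continuousWithinAt_const hcon
  rcases mem_nhdsGE_iff_exists_Ico_subset.1 hev with ⟨ε, hε, hsub⟩
  have hlt : q < ε := hε
  obtain ⟨y, hyS, hy⟩ := (csInf_lt_iff hbdd ⟨1, h1⟩).1 (show sInf S < ε from hlt)
  have hyq : q ≤ y := csInf_le hbdd hyS
  have := hsub ⟨hyq, hy⟩
  exact absurd hyS.2 (not_le.2 this)

lemma quantile_le_iff (Z : ℝ → ℝ → ℝ) (h : IsLimitPerm Z) (x u t : ℝ) (hu : u ≤ 1)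
    (ht : t ∈ Set.Ico (0:ℝ) 1) : quantile Z x u ≤ t ↔ u ≤ Z x t := by
  have hbdd : BddBelow {y | y ∈ Set.Icc (0:ℝ) 1 ∧ u ≤ Z x y} :=
    ⟨0, fun y hy => hy.1.1⟩
  constructor
  · intro hle
    have hq1 : quantile Z x u < 1 := lt_of_le_of_lt hle ht.2
    have h1 := le_Z_quantile Z h x u hu hq1
    have hmem := quantile_mem Z h x u hu
    exact h1.trans (h.2.2.1 x ⟨hmem.1, hmem.2⟩ ⟨ht.1, ht.2.le⟩ hle)
  · intro hle
    exact csInf_le hbdd ⟨⟨ht.1, ht.2.le⟩, hle⟩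

end LPaux

namespace LPaux

noncomputable def sq : Set (ℝ × ℝ) := Set.Icc (0:ℝ) 1 ×ˢ Set.Icc (0:ℝ) 1

lemma sq_meas : MeasurableSet sq := (measurableSet_Icc).prod measurableSet_Icc

open scoped Classical in
noncomputable def qext (Z : ℝ → ℝ → ℝ) : ℝ × ℝ → ℝ :=
  fun p => if p ∈ sq then quantile Z p.1 p.2 else 0

lemma qext_measurable (Z : ℝ → ℝ → ℝ) (h : IsLimitPerm Z) : Measurable (qext Z) := by
  apply measurable_of_Iic
  intro t
  rcases lt_or_ge t 0 with ht | ht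
  · have : qext Z ⁻¹' Set.Iic t = ∅ := by
      ext p
      simp only [Set.mem_preimage, Set.mem_Iic, Set.mem_empty_iff_false, iff_false, not_le, qext]
      split_ifs with hp
      · exact lt_of_lt_of_le ht (quantile_mem Z h p.1 p.2 hp.2.2).1
      · exact ht
    rw [this]; exact MeasurableSet.empty
  rcases le_or_gt 1 t with ht1 | ht1
  · have : qext Z ⁻¹' Set.Iic t = Set.univ := by
      ext p
      simp only [Set.mem_preimage, Set.mem_Iic, Set.mem_univ, iff_true, qext]
      split_ifs with hp
      · exact le_trans (quantile_mem Z h p.1 p.2 hp.2.2).2 ht1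
      · exact ht
    rw [this]; exact MeasurableSet.univ
  · have : qext Z ⁻¹' Set.Iic t = (sq ∩ {p : ℝ × ℝ | p.2 ≤ Z p.1 t}) ∪ sqᶜ := by
      ext p
      simp only [Set.mem_preimage, Set.mem_Iic, Set.mem_union, Set.mem_inter_iff,
        Set.mem_compl_iff, Set.mem_setOf_eq, qext]
      classical
      split_ifs with hp
      · rw [quantile_le_iff Z h p.1 p.2 t hp.2.2 ⟨ht, ht1⟩]
        simp [hp]
      · simp [hp, ht]
    rw [this]
    refine MeasurableSet.union (sq_meas.inter ?_) sq_meas.compl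
    exact measurableSet_le measurable_snd
      ((h.1).comp (measurable_fst.prodMk measurable_const))

lemma aemeas (Z : ℝ → ℝ → ℝ) (h : IsLimitPerm Z) :
    AEMeasurable (fun p : ℝ × ℝ => (p.1, quantile Z p.1 p.2))
      (volume.restrict sq) := by
  have hm : Measurable (fun p : ℝ × ℝ => (p.1, qext Z p)) :=
    measurable_fst.prodMk (qext_measurable Z h)
  refine hm.aemeasurable.congr ?_
  filter_upwards [ae_restrict_mem sq_meas] with p hp
  simp [qext, hp]

end LPaux

namespace LPaux

lemma rect_formula (Z : ℝ → ℝ → ℝ) (h : IsLimitPerm Z) (a b : ℝ)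
    (ha : a ∈ Set.Icc (0:ℝ) 1) (hb : b ∈ Set.Ico (0:ℝ) 1) :
    assocMeasure Z (Set.Icc 0 a ×ˢ Set.Icc 0 b)
      = ∫⁻ x in Set.Icc (0:ℝ) a, ENNReal.ofReal (Z x b) := by
  have hS : MeasurableSet (Set.Icc (0:ℝ) a ×ˢ Set.Icc (0:ℝ) b) :=
    measurableSet_Icc.prod measurableSet_Icc
  have hrw : assocMeasure Z = Measure.map (fun p : ℝ × ℝ => (p.1, quantile Z p.1 p.2))
      (volume.restrict sq) := rfl
  rw [hrw, Measure.map_apply_of_aemeasurable (aemeas Z h) hS,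
    Measure.restrict_apply' sq_meas]
  have hE : (fun p : ℝ × ℝ => (p.1, quantile Z p.1 p.2)) ⁻¹'
      (Set.Icc (0:ℝ) a ×ˢ Set.Icc (0:ℝ) b) ∩ sq
      = {p : ℝ × ℝ | p.1 ∈ Set.Icc (0:ℝ) a ∧ p.2 ∈ Set.Icc (0:ℝ) 1 ∧ p.2 ≤ Z p.1 b} := by
    ext p
    simp only [Set.mem_inter_iff, Set.mem_preimage, Set.mem_prod, Set.mem_setOf_eq, sq]
    constructor
    · rintro ⟨⟨hx, hy⟩, hpx, hpu⟩
      refine ⟨hx, hpu, ?_⟩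
      exact (quantile_le_iff Z h p.1 p.2 b hpu.2 hb).1 hy.2
    · rintro ⟨hx, hpu, hle⟩
      refine ⟨⟨hx, ?_, (quantile_le_iff Z h p.1 p.2 b hpu.2 hb).2 hle⟩,
        ⟨hx.1, hx.2.trans ha.2⟩, hpu⟩
      exact (quantile_mem Z h p.1 p.2 hpu.2).1
  rw [hE]
  have hEm : MeasurableSet {p : ℝ × ℝ | p.1 ∈ Set.Icc (0:ℝ) a ∧ p.2 ∈ Set.Icc (0:ℝ) 1 ∧
      p.2 ≤ Z p.1 b} := by
    refine MeasurableSet.inter (measurable_fst measurableSet_Icc) ?_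
    exact (measurable_snd measurableSet_Icc).inter
      (measurableSet_le measurable_snd ((h.1).comp (measurable_fst.prodMk measurable_const)))
  rw [Measure.volume_eq_prod, Measure.prod_apply hEm]
  have hslice : (fun x => volume (Prod.mk x ⁻¹' {p : ℝ × ℝ | p.1 ∈ Set.Icc (0:ℝ) a ∧
      p.2 ∈ Set.Icc (0:ℝ) 1 ∧ p.2 ≤ Z p.1 b}))
      = Set.indicator (Set.Icc (0:ℝ) a) (fun x => ENNReal.ofReal (Z x b)) := by
    funext x
    by_cases hx : x ∈ Set.Icc (0:ℝ) a
    · have : Prod.mk x ⁻¹' {p : ℝ × ℝ | p.1 ∈ Set.Icc (0:ℝ) a ∧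
          p.2 ∈ Set.Icc (0:ℝ) 1 ∧ p.2 ≤ Z p.1 b} = Set.Icc 0 (Z x b) := by
        ext u
        simp only [Set.mem_preimage, Set.mem_setOf_eq, Set.mem_Icc]
        constructor
        · rintro ⟨_, hu, hle⟩; exact ⟨hu.1, hle⟩
        · rintro ⟨h0, hle⟩
          exact ⟨hx, ⟨h0, hle.trans (h.2.1 x b).2⟩, hle⟩
      rw [this, Real.volume_Icc, Set.indicator_of_mem hx, sub_zero]
    · have : Prod.mk x ⁻¹' {p : ℝ × ℝ | p.1 ∈ Set.Icc (0:ℝ) a ∧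
          p.2 ∈ Set.Icc (0:ℝ) 1 ∧ p.2 ≤ Z p.1 b} = ∅ := by
        ext u
        simp only [Set.mem_preimage, Set.mem_setOf_eq, Set.mem_empty_iff_false, iff_false,
          not_and]
        intro hx'; exact absurd hx' hx
      rw [this, Set.indicator_of_notMem hx, measure_empty]
  rw [hslice]
  exact lintegral_indicator measurableSet_Icc _

end LPaux

namespace LPaux

lemma engine (Z₁ Z₂ : ℝ → ℝ → ℝ) (h₁ : IsLimitPerm Z₁) (h₂ : IsLimitPerm Z₂)
    (hrect : ∀ a ∈ Set.Icc (0:ℝ) 1, ∀ b ∈ Set.Ico (0:ℝ) 1,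
      assocMeasure Z₁ (Set.Icc 0 a ×ˢ Set.Icc 0 b)
        = assocMeasure Z₂ (Set.Icc 0 a ×ˢ Set.Icc 0 b)) :
    ∀ᵐ x ∂(volume.restrict (Set.Icc (0:ℝ) 1)), ∀ y ∈ Set.Icc (0:ℝ) 1, Z₁ x y = Z₂ x y := by
  set μ₀ := volume.restrict (Set.Icc (0:ℝ) 1) with hμ₀
  haveI hfin : IsFiniteMeasure μ₀ := by
    constructor
    rw [Measure.restrict_apply_univ]
    exact measure_Icc_lt_top
  -- Step A
  have stepA : ∀ b ∈ Set.Ico (0:ℝ) 1,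
      (fun x => Z₁ x b) =ᵐ[μ₀] (fun x => Z₂ x b) := by
    intro b hb
    have hmf : ∀ (Z : ℝ → ℝ → ℝ), IsLimitPerm Z →
        Measurable (fun x => ENNReal.ofReal (Z x b)) := by
      intro Z h
      exact ENNReal.measurable_ofReal.comp
        ((h.1).comp (measurable_id.prodMk measurable_const))
    have hint : ∀ (Z : ℝ → ℝ → ℝ), IsLimitPerm Z →
        ∫⁻ x, ENNReal.ofReal (Z x b) ∂μ₀ ≠ ⊤ := by
      intro Z h
      have hle : ∫⁻ x, ENNReal.ofReal (Z x b) ∂μ₀ ≤ ∫⁻ _, 1 ∂μ₀ :=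
        lintegral_mono fun x => ENNReal.ofReal_le_one.2 (h.2.1 x b).2
      refine ne_of_lt (lt_of_le_of_lt hle ?_)
      rw [lintegral_const, one_mul]
      exact measure_lt_top _ _
    set M₁ := μ₀.withDensity (fun x => ENNReal.ofReal (Z₁ x b)) with hM₁
    set M₂ := μ₀.withDensity (fun x => ENNReal.ofReal (Z₂ x b)) with hM₂
    haveI : IsFiniteMeasure M₁ := isFiniteMeasure_withDensity (hint Z₁ h₁)
    haveI : IsFiniteMeasure M₂ := isFiniteMeasure_withDensity (hint Z₂ h₂)
    have hM : M₁ = M₂ := by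
      refine Measure.ext_of_Iic M₁ M₂ (fun a => ?_)
      rw [hM₁, hM₂, withDensity_apply _ measurableSet_Iic,
        withDensity_apply _ measurableSet_Iic, hμ₀,
        Measure.restrict_restrict measurableSet_Iic]
      rcases lt_or_ge a 0 with ha | ha
      · have hempty : Set.Iic a ∩ Set.Icc (0:ℝ) 1 = ∅ := by
          ext x
          simp only [Set.mem_inter_iff, Set.mem_Iic, Set.mem_Icc, Set.mem_empty_iff_false,
            iff_false, not_and]
          intro hxa hx0 _
          exact absurd (hxa.trans_lt ha) (not_lt.2 hx0)
        rw [hempty, Measure.restrict_empty, lintegral_zero_measure, lintegral_zero_measure]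
      · have hmin : Set.Iic a ∩ Set.Icc (0:ℝ) 1 = Set.Icc 0 (min a 1) := by
          ext x
          simp only [Set.mem_inter_iff, Set.mem_Iic, Set.mem_Icc, le_min_iff]
          tauto
        have hminmem : min a 1 ∈ Set.Icc (0:ℝ) 1 :=
          ⟨le_min ha zero_le_one, min_le_right _ _⟩
        rw [hmin, ← rect_formula Z₁ h₁ _ b hminmem hb, ← rect_formula Z₂ h₂ _ b hminmem hb]
        exact hrect _ hminmem b hb
    have hae : (fun x => ENNReal.ofReal (Z₁ x b)) =ᵐ[μ₀]
        (fun x => ENNReal.ofReal (Z₂ x b)) := by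
      refine ae_eq_of_forall_setLIntegral_eq_of_sigmaFinite (hmf Z₁ h₁) (hmf Z₂ h₂)
        (fun s hs _ => ?_)
      rw [← withDensity_apply _ hs, ← withDensity_apply _ hs, ← hM₁, ← hM₂, hM]
    filter_upwards [hae] with x hx
    exact (ENNReal.ofReal_eq_ofReal_iff (h₁.2.1 x b).1 (h₂.2.1 x b).1).1 hx
  -- Step B
  have stepB : ∀ᵐ x ∂μ₀, ∀ q : ℚ, (q:ℝ) ∈ Set.Ico (0:ℝ) 1 → Z₁ x q = Z₂ x q := by
    rw [ae_all_iff]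
    intro q
    by_cases hq : (q:ℝ) ∈ Set.Ico (0:ℝ) 1
    · filter_upwards [stepA q hq] with x hx _
      exact hx
    · exact Filter.Eventually.of_forall (fun x hq' => absurd hq' hq)
  -- Step C
  filter_upwards [stepB] with x hx y hy
  rcases eq_or_lt_of_le hy.2 with hy1 | hy1
  · rw [hy1, h₁.2.2.2.2.1 x, h₂.2.2.2.2.1 x]
  · have hex : ∀ n : ℕ, ∃ qq : ℚ, y < (qq:ℝ) ∧ (qq:ℝ) < min (y + 1/(n+1)) 1 := by
      intro n
      refine exists_rat_btwn (lt_min ?_ hy1)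
      have : (0:ℝ) < 1/(n+1) := by positivity
      linarith
    choose q hq1 hq2 using hex
    have htend : Filter.Tendsto (fun n => ((q n : ℝ))) Filter.atTop (nhds y) := by
      have hub : Filter.Tendsto (fun n : ℕ => y + 1/(n+1 : ℝ)) Filter.atTop (nhds y) := by
        have := tendsto_one_div_add_atTop_nhds_zero_nat (𝕜 := ℝ)
        have h' := Filter.Tendsto.const_add y this
        simpa using h'
      refine tendsto_of_tendsto_of_tendsto_of_le_of_le tendsto_const_nhds hub
        (fun n => (hq1 n).le) (fun n => ((hq2 n).trans_le (min_le_left _ _)).le)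
    have htend' : Filter.Tendsto (fun n => ((q n : ℝ))) Filter.atTop
        (nhdsWithin y (Set.Ici y)) :=
      tendsto_nhdsWithin_of_tendsto_nhds_of_eventually_within _ htend
        (Filter.Eventually.of_forall (fun n => (hq1 n).le))
    have hcw₁ := (h₁.2.2.2.1 x y ⟨hy.1, hy1⟩).tendsto.comp htend'
    have hcw₂ := (h₂.2.2.2.1 x y ⟨hy.1, hy1⟩).tendsto.comp htend'
    have heq : (Z₁ x ∘ fun n => ((q n : ℝ))) = (Z₂ x ∘ fun n => ((q n : ℝ))) := by
      funext n
      simp only [Function.comp_apply]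
      exact hx (q n) ⟨hy.1.trans (hq1 n).le, (hq2 n).trans_le (min_le_right _ _)⟩
    rw [heq] at hcw₁
    exact tendsto_nhds_unique hcw₁ hcw₂

end LPaux

namespace LPaux

lemma assoc_eq_of_null (Z₁ Z₂ : ℝ → ℝ → ℝ) (h₁ : IsLimitPerm Z₁) (h₂ : IsLimitPerm Z₂)
    (hnull : volume {x ∈ Set.Icc (0:ℝ) 1 | ∃ y ∈ Set.Icc (0:ℝ) 1, Z₁ x y ≠ Z₂ x y} = 0) :
    assocMeasure Z₁ = assocMeasure Z₂ := by
  obtain ⟨B, hBsup, hBm, hB0⟩ := exists_measurable_superset_of_null hnull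
  have hprod : volume (B ×ˢ (Set.univ : Set ℝ)) = 0 := by
    rw [Measure.volume_eq_prod, Measure.prod_prod, hB0, zero_mul]
  have hae : (fun p : ℝ × ℝ => (p.1, quantile Z₁ p.1 p.2)) =ᵐ[volume.restrict sq]
      (fun p : ℝ × ℝ => (p.1, quantile Z₂ p.1 p.2)) := by
    rw [Filter.EventuallyEq, ae_iff, Measure.restrict_apply' sq_meas]
    refine measure_mono_null ?_ hprod
    rintro ⟨x, u⟩ ⟨hne, hsq⟩
    simp only [Set.mem_setOf_eq, Prod.mk.injEq, eq_self_iff_true, true_and] at hne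
    have hqne : quantile Z₁ x u ≠ quantile Z₂ x u := by
      intro hc; exact hne hc
    have hxbad : x ∈ {x ∈ Set.Icc (0:ℝ) 1 | ∃ y ∈ Set.Icc (0:ℝ) 1, Z₁ x y ≠ Z₂ x y} := by
      refine ⟨hsq.1, ?_⟩
      by_contra hno
      push_neg at hno
      apply hqne
      unfold quantile
      congr 1
      ext y
      simp only [Set.mem_setOf_eq, and_congr_right_iff]
      intro hy
      rw [hno y hy]
    exact ⟨hBsup hxbad, Set.mem_univ _⟩
  show Measure.map _ (volume.restrict sq) = Measure.map _ (volume.restrict sq)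
  exact Measure.map_congr hae

lemma assoc_univ (Z : ℝ → ℝ → ℝ) (h : IsLimitPerm Z) :
    assocMeasure Z Set.univ = 1 := by
  have hrw : assocMeasure Z = Measure.map (fun p : ℝ × ℝ => (p.1, quantile Z p.1 p.2))
      (volume.restrict sq) := rfl
  rw [hrw, Measure.map_apply_of_aemeasurable (aemeas Z h) MeasurableSet.univ,
    Set.preimage_univ, Measure.restrict_apply' sq_meas, Set.univ_inter]
  show (volume : Measure (ℝ × ℝ)) (Set.Icc 0 1 ×ˢ Set.Icc 0 1) = 1
  rw [Measure.volume_eq_prod, Measure.prod_prod, Real.volume_Icc]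
  norm_num

lemma assoc_le_one (Z : ℝ → ℝ → ℝ) (h : IsLimitPerm Z) (S : Set (ℝ × ℝ)) :
    assocMeasure Z S ≤ 1 := by
  rw [← assoc_univ Z h]
  exact measure_mono (Set.subset_univ _)

lemma assoc_far (Z : ℝ → ℝ → ℝ) (h : IsLimitPerm Z) :
    assocMeasure Z (Set.Icc 2 3 ×ˢ Set.Icc 2 3) = 0 := by
  have hrw : assocMeasure Z = Measure.map (fun p : ℝ × ℝ => (p.1, quantile Z p.1 p.2))
      (volume.restrict sq) := rfl
  rw [hrw, Measure.map_apply_of_aemeasurable (aemeas Z h)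
    (measurableSet_Icc.prod measurableSet_Icc), Measure.restrict_apply' sq_meas]
  convert measure_empty
  · ext p
    simp only [Set.mem_empty_iff_false, iff_false]
    rintro ⟨hpre, hsq⟩
    have ha : (2:ℝ) ≤ p.1 := hpre.1.1
    have hb : p.1 ≤ 1 := hsq.1.2
    linarith
  · infer_instance

end LPaux

/-- For limit permutations `Z₁, Z₂` with associated random variables `(X₁,Y₁)`,
`(X₂,Y₂)`: `d_□(Z₁,Z₂) = 0` iff `(X₁,Y₁) ∼ (X₂,Y₂)`, which holds iff
`{x : Z₁(x,·) ≢ Z₂(x,·)}` has Lebesgue measure zero. -/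
theorem dRect_eq_zero_iff_same_distribution_iff_ae_eq
    (Z₁ Z₂ : ℝ → ℝ → ℝ) (h₁ : IsLimitPerm Z₁) (h₂ : IsLimitPerm Z₂) :
    (dRect (assocMeasure Z₁) (assocMeasure Z₂) = 0 ↔ assocMeasure Z₁ = assocMeasure Z₂) ∧
    (assocMeasure Z₁ = assocMeasure Z₂ ↔
      volume {x ∈ Set.Icc (0:ℝ) 1 | ∃ y ∈ Set.Icc (0:ℝ) 1, Z₁ x y ≠ Z₂ x y} = 0) := by
  have hnull_of_rect : (∀ a ∈ Set.Icc (0:ℝ) 1, ∀ b ∈ Set.Ico (0:ℝ) 1,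
      assocMeasure Z₁ (Set.Icc 0 a ×ˢ Set.Icc 0 b)
        = assocMeasure Z₂ (Set.Icc 0 a ×ˢ Set.Icc 0 b)) →
      volume {x ∈ Set.Icc (0:ℝ) 1 | ∃ y ∈ Set.Icc (0:ℝ) 1, Z₁ x y ≠ Z₂ x y} = 0 := by
    intro hrect
    have hae := LPaux.engine Z₁ Z₂ h₁ h₂ hrect
    rw [ae_iff, Measure.restrict_apply' measurableSet_Icc] at hae
    refine measure_mono_null ?_ hae
    rintro x ⟨hx1, y, hy, hne⟩
    refine ⟨?_, hx1⟩
    simp only [Set.mem_setOf_eq]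
    push_neg
    exact ⟨y, hy, hne⟩
  have hfar₁ : ∀ (S : Set (ℝ × ℝ)), assocMeasure Z₁ S ≠ ⊤ :=
    fun S => ne_top_of_le_ne_top (by simp) (LPaux.assoc_le_one Z₁ h₁ S)
  have hfar₂ : ∀ (S : Set (ℝ × ℝ)), assocMeasure Z₂ S ≠ ⊤ :=
    fun S => ne_top_of_le_ne_top (by simp) (LPaux.assoc_le_one Z₂ h₂ S)
  constructor
  · constructor
    · intro hd
      -- the sup being zero forces equality on all rectangles
      set S : Set ℝ := {r : ℝ | ∃ x₁ x₂ y₁ y₂ : ℝ, x₁ ≤ x₂ ∧ y₁ ≤ y₂ ∧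
        r = |((assocMeasure Z₁) (Set.Icc x₁ x₂ ×ˢ Set.Icc y₁ y₂)).toReal
              - ((assocMeasure Z₂) (Set.Icc x₁ x₂ ×ˢ Set.Icc y₁ y₂)).toReal|} with hS
      have hbdd : BddAbove S := by
        refine ⟨2, ?_⟩
        rintro r ⟨x₁, x₂, y₁, y₂, -, -, rfl⟩
        have ha : ((assocMeasure Z₁) (Set.Icc x₁ x₂ ×ˢ Set.Icc y₁ y₂)).toReal ≤ 1 := by
          have := ENNReal.toReal_mono (b := (1 : ENNReal)) (by simp)
            (LPaux.assoc_le_one Z₁ h₁ (Set.Icc x₁ x₂ ×ˢ Set.Icc y₁ y₂))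
          simpa using this
        have hb : ((assocMeasure Z₂) (Set.Icc x₁ x₂ ×ˢ Set.Icc y₁ y₂)).toReal ≤ 1 := by
          have := ENNReal.toReal_mono (b := (1 : ENNReal)) (by simp)
            (LPaux.assoc_le_one Z₂ h₂ (Set.Icc x₁ x₂ ×ˢ Set.Icc y₁ y₂))
          simpa using this
        have ha0 := ENNReal.toReal_nonneg
          (a := (assocMeasure Z₁) (Set.Icc x₁ x₂ ×ˢ Set.Icc y₁ y₂))
        have hb0 := ENNReal.toReal_nonneg
          (a := (assocMeasure Z₂) (Set.Icc x₁ x₂ ×ˢ Set.Icc y₁ y₂))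
        rw [abs_sub_le_iff]
        constructor <;> linarith
      have hzero : ∀ r ∈ S, r = 0 := by
        intro r hr
        have hle : r ≤ 0 := by
          have := le_csSup hbdd hr
          rw [show sSup S = dRect (assocMeasure Z₁) (assocMeasure Z₂) from rfl, hd] at this
          exact this
        obtain ⟨x₁, x₂, y₁, y₂, -, -, rfl⟩ := hr
        exact le_antisymm hle (abs_nonneg _)
      have hrect : ∀ a ∈ Set.Icc (0:ℝ) 1, ∀ b ∈ Set.Ico (0:ℝ) 1,
          assocMeasure Z₁ (Set.Icc 0 a ×ˢ Set.Icc 0 b)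
            = assocMeasure Z₂ (Set.Icc 0 a ×ˢ Set.Icc 0 b) := by
        intro a ha b hb
        have hmem : |((assocMeasure Z₁) (Set.Icc 0 a ×ˢ Set.Icc 0 b)).toReal
            - ((assocMeasure Z₂) (Set.Icc 0 a ×ˢ Set.Icc 0 b)).toReal| ∈ S :=
          ⟨0, a, 0, b, ha.1, hb.1, rfl⟩
        have h0 := hzero _ hmem
        rw [abs_eq_zero, sub_eq_zero] at h0
        exact (ENNReal.toReal_eq_toReal_iff' (hfar₁ _) (hfar₂ _)).1 h0
      exact LPaux.assoc_eq_of_null Z₁ Z₂ h₁ h₂ (hnull_of_rect hrect)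
    · intro hμ
      have hSeq : {r : ℝ | ∃ x₁ x₂ y₁ y₂ : ℝ, x₁ ≤ x₂ ∧ y₁ ≤ y₂ ∧
          r = |((assocMeasure Z₁) (Set.Icc x₁ x₂ ×ˢ Set.Icc y₁ y₂)).toReal
                - ((assocMeasure Z₂) (Set.Icc x₁ x₂ ×ˢ Set.Icc y₁ y₂)).toReal|}
          = {(0:ℝ)} := by
        ext r
        simp only [Set.mem_setOf_eq, Set.mem_singleton_iff]
        constructor
        · rintro ⟨x₁, x₂, y₁, y₂, -, -, rfl⟩
          rw [hμ, sub_self, abs_zero]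
        · rintro rfl
          exact ⟨0, 1, 0, 1, zero_le_one, zero_le_one, by rw [hμ, sub_self, abs_zero]⟩
      rw [dRect, hSeq, csSup_singleton]
  · exact ⟨fun hμ => hnull_of_rect (fun a _ b _ => by rw [hμ]),
      LPaux.assoc_eq_of_null Z₁ Z₂ h₁ h₂⟩
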